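/- If G is a group whose center is trivial, then the automorphism group Aut(G) also has trivial center. -/
import Mathlib


/-- If a group `G` has trivial center, then its automorphism group `Aut G = MulAut G`
also has trivial center. -/
theorem center_trivial_of_aut_of_center_trivial (G : Type*) [Group G]
    (hG : Subgroup.center G = ⊥) :
    Subgroup.center (MulAut G) = ⊥ := by
  rw [eq_bot_iff]
  intro φ hφ
  rw [Subgroup.mem_bot]
  ext g
  have key : ∀ x : G, φ g * φ x * (φ g)⁻¹ = g * φ x * g⁻¹ := by
    intro x
    have h := (Subgroup.mem_center_iff.mp hφ (MulAut.conj g))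
    have := congrArg (fun ψ : MulAut G => ψ x) h
    simp [MulAut.conj_apply, mul_assoc] at this
    simpa [MulAut.conj_apply, mul_assoc] using this.symm
  have hc : g⁻¹ * φ g ∈ Subgroup.center G := by
    rw [Subgroup.mem_center_iff]
    intro y
    obtain ⟨x, rfl⟩ := φ.surjective y
    have h' := mul_inv_eq_iff_eq_mul.mp (key x)
    refine (calc g⁻¹ * φ g * φ x = g⁻¹ * (φ g * φ x) := mul_assoc _ _ _
      _ = g⁻¹ * (g * φ x * g⁻¹ * φ g) := by rw [h']
      _ = φ x * (g⁻¹ * φ g) := by group).symm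
  rw [hG, Subgroup.mem_bot] at hc
  simpa using (inv_mul_eq_one.mp hc).symm
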